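/- Let 𝔽 be ℝ or ℂ and n ≥ 1. Let T : 𝔽ⁿ → 𝔽ⁿ be a linear map, where 𝔽ⁿ is equipped with the ℓ₁-norm ‖x‖₁ = Σ_{j=1}^n |x_j|, and identify T with its matrix (t_{ij}) so that (Tx)_i = Σ_j t_{ij} x_j. Then T preserves TEA pairs (i.e., (Tx, Ty) is a TEA pair whenever (x, y) is a TEA pair) if and only if each row of T has at most one nonzero entry, i.e., for each i there is at most one j with t_{ij} ≠ 0. -/

import Mathlib

open scoped ENNReal

/-- Two vectors in a normed space form a *triangle equality attaining* (TEA) pair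
if `‖x + y‖ = ‖x‖ + ‖y‖`. -/
def TEAPair {E : Type*} [NormedAddCommGroup E] (x y : E) : Prop :=
  ‖x + y‖ = ‖x‖ + ‖y‖

lemma l1_norm_eq {𝕜 : Type*} [RCLike 𝕜] {n : ℕ} (x : PiLp 1 (fun _ : Fin n => 𝕜)) :
    ‖x‖ = ∑ i, ‖x i‖ := by
  simp [PiLp.norm_eq_sum (p := 1) (by norm_num)]

lemma tea_iff_coord {𝕜 : Type*} [RCLike 𝕜] {n : ℕ} (x y : PiLp 1 (fun _ : Fin n => 𝕜)) :
    TEAPair x y ↔ ∀ i, ‖x i + y i‖ = ‖x i‖ + ‖y i‖ := by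
  have hle : ∀ i ∈ Finset.univ, ‖x i + y i‖ ≤ ‖x i‖ + ‖y i‖ :=
    fun i _ => norm_add_le _ _
  unfold TEAPair
  rw [l1_norm_eq (x + y), l1_norm_eq x, l1_norm_eq y, ← Finset.sum_add_distrib]
  have hxy : ∀ i : Fin n, (x + y) i = x i + y i := fun i => rfl
  simp_rw [hxy]
  rw [Finset.sum_eq_sum_iff_of_le hle]
  constructor
  · intro h i; exact h i (Finset.mem_univ i)
  · intro h i _; exact h i

/-- Let `𝔽` be `ℝ` or `ℂ` and `n ≥ 1`.  A linear map `T` on `𝔽ⁿ` with the `ℓ₁`-norm,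
identified with its matrix `t` (so that `(Tx)ᵢ = ∑ⱼ t i j * x j`), preserves TEA pairs
if and only if each row of `t` has at most one nonzero entry. -/
theorem l1_TEA_preserver_iff_rows {𝕜 : Type*} [RCLike 𝕜] {n : ℕ} (hn : 1 ≤ n)
    (T : PiLp 1 (fun _ : Fin n => 𝕜) →ₗ[𝕜] PiLp 1 (fun _ : Fin n => 𝕜))
    (t : Matrix (Fin n) (Fin n) 𝕜)
    (ht : ∀ (x : PiLp 1 (fun _ : Fin n => 𝕜)) (i : Fin n), T x i = ∑ j, t i j * x j) :
    (∀ x y : PiLp 1 (fun _ : Fin n => 𝕜), TEAPair x y → TEAPair (T x) (T y)) ↔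
      ∀ i j j' : Fin n, t i j ≠ 0 → t i j' ≠ 0 → j = j' := by
  constructor
  · intro hpres i j j' hj hj'
    by_contra hne
    -- counterexample vectors
    set x : PiLp 1 (fun _ : Fin n => 𝕜) := WithLp.toLp 1 (fun k => if k = j then (t i j)⁻¹ else 0) with hx
    set y : PiLp 1 (fun _ : Fin n => 𝕜) := WithLp.toLp 1 (fun k => if k = j' then -(t i j')⁻¹ else 0) with hy
    have htea : TEAPair x y := by
      rw [tea_iff_coord]
      intro k
      by_cases hk : k = j
      · have : y k = 0 := by
          show (if k = j' then -(t i j')⁻¹ else 0) = 0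
          rw [if_neg]; rw [hk]; exact hne
        simp [this]
      · have : x k = 0 := by
          show (if k = j then (t i j)⁻¹ else 0) = 0
          rw [if_neg hk]
        simp [this]
    have h1 : T x i = 1 := by
      rw [ht]
      rw [Finset.sum_eq_single j]
      · show t i j * (if j = j then (t i j)⁻¹ else 0) = 1
        simp [mul_inv_cancel₀ hj]
      · intro b _ hb
        show t i b * (if b = j then (t i j)⁻¹ else 0) = 0
        simp [hb]
      · simp
    have h2 : T y i = -1 := by
      rw [ht]
      rw [Finset.sum_eq_single j']
      · show t i j' * (if j' = j' then -(t i j')⁻¹ else 0) = -1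
        simp [mul_inv_cancel₀ hj']
      · intro b _ hb
        show t i b * (if b = j' then -(t i j')⁻¹ else 0) = 0
        simp [hb]
      · simp
    have := (tea_iff_coord (T x) (T y)).mp (hpres x y htea) i
    rw [h1, h2] at this
    norm_num at this
  · intro hrow x y hxy
    rw [tea_iff_coord] at hxy ⊢
    intro i
    rw [ht, ht]
    by_cases hz : ∀ j, t i j = 0
    · simp [hz]
    · push_neg at hz
      obtain ⟨j₀, hj₀⟩ := hz
      have hsum : ∀ z : PiLp 1 (fun _ : Fin n => 𝕜),
          ∑ j, t i j * z j = t i j₀ * z j₀ := by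
        intro z
        rw [Finset.sum_eq_single j₀]
        · intro b _ hb
          by_cases hbz : t i b = 0
          · simp [hbz]
          · exact absurd (hrow i b j₀ hbz hj₀) hb
        · simp
      rw [hsum, hsum, ← mul_add, norm_mul, norm_mul, norm_mul, hxy j₀, mul_add]
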